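/- arXiv:2012.02444 — 6 statements merged into one kernel-verified Lean document; each statement's English description precedes it below -/
import Mathlib

section
/- Assume that the sequence (m_n)_{n∈ℕ} converges weakly to m_∞ on V × W × W (i.e. integrals of every bounded continuous real function converge). Then there exists a strictly increasing sequence (n_l)_{l∈ℕ} of natural numbers such that for μ-almost every x ∈ V, the probability measures K_{n_l}(x,·) converge weakly to K_∞(x,·) on W, i.e. for every bounded continuous g : W → ℝ, ∫_W g(y) K_{n_l}(x, dy) → ∫_W g(y) K_∞(x, dy). -/
open MeasureTheory ProbabilityTheory Filter
open scoped ProbabilityTheory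

open scoped NNReal ENNReal


open MeasureTheory ProbabilityTheory Filter Topology

section helpers

/-- Build a bounded continuous function from a continuous function with a uniform bound. -/
noncomputable def mkBCF {α : Type*} [TopologicalSpace α] (f : α → ℝ) (hc : Continuous f) (C : ℝ)
    (h : ∀ x, |f x| ≤ C) : BoundedContinuousFunction α ℝ :=
  ⟨⟨f, hc⟩, ⟨2 * C, fun x y => by
    rw [Real.dist_eq]
    have hx := abs_le.mp (h x); have hy := abs_le.mp (h y)
    exact abs_le.mpr ⟨by linarith, by linarith⟩⟩⟩

@[simp] lemma mkBCF_apply {α : Type*} [TopologicalSpace α] (f : α → ℝ) (hc : Continuous f) (C : ℝ)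
    (h : ∀ x, |f x| ≤ C) (x : α) : mkBCF f hc C h x = f x := rfl

lemma abs_apply_le_norm {α : Type*} [TopologicalSpace α] (g : BoundedContinuousFunction α ℝ)
    (x : α) : |g x| ≤ ‖g‖ := by
  rw [← Real.norm_eq_abs]; exact g.norm_coe_le_norm x

lemma abs_integral_le {W : Type*} [MeasurableSpace W] [TopologicalSpace W]
    [OpensMeasurableSpace W] (ν : Measure W) [IsProbabilityMeasure ν]
    (g : BoundedContinuousFunction W ℝ) : |∫ y, g y ∂ν| ≤ ‖g‖ := by
  calc |∫ y, g y ∂ν| ≤ ∫ y, |g y| ∂ν := by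
        simpa [Real.norm_eq_abs] using norm_integral_le_integral_norm (μ := ν) (f := fun y => g y)
    _ ≤ ∫ _, ‖g‖ ∂ν := integral_mono (g.integrable ν).abs (integrable_const _)
        (fun y => abs_apply_le_norm g y)
    _ = ‖g‖ := by simp

lemma integrable_of_bound {α : Type*} [MeasurableSpace α] {μ : Measure α} [IsFiniteMeasure μ]
    {f : α → ℝ} (hm : AEStronglyMeasurable f μ) (C : ℝ) (h : ∀ x, |f x| ≤ C) :
    Integrable f μ :=
  (integrable_const C).mono' hm (Eventually.of_forall fun x => by
    simpa [Real.norm_eq_abs] using h x)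

lemma stronglyMeasurable_integral_kernel {V W : Type*} [MeasurableSpace V] [MeasurableSpace W]
    [TopologicalSpace W] [OpensMeasurableSpace W]
    (κ : ProbabilityTheory.Kernel V W) [IsSFiniteKernel κ] (g : BoundedContinuousFunction W ℝ) :
    StronglyMeasurable fun x => ∫ y, g y ∂κ x :=
  StronglyMeasurable.integral_kernel_prod_right' (κ := κ)
    (g.continuous.stronglyMeasurable.comp_measurable measurable_snd)

end helpers

section compProdCalc

variable {V W : Type*}
  [TopologicalSpace V] [PolishSpace V] [MeasurableSpace V] [BorelSpace V]
  [TopologicalSpace W] [PolishSpace W] [MeasurableSpace W] [BorelSpace W]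

lemma comp_sq (μ : Measure V) [IsProbabilityMeasure μ] (κ : ProbabilityTheory.Kernel V W)
    [IsMarkovKernel κ] (g : BoundedContinuousFunction W ℝ) :
    ∫ p : V × W × W, g p.2.1 * g p.2.2 ∂(μ ⊗ₘ (κ ×ₖ κ)) =
      ∫ x, (∫ y, g y ∂κ x) ^ 2 ∂μ := by
  have hcont : Continuous fun p : V × W × W => g p.2.1 * g p.2.2 :=
    ((g.continuous.comp (continuous_fst.comp continuous_snd)).mul
      (g.continuous.comp (continuous_snd.comp continuous_snd)))
  have hint : Integrable (fun p : V × W × W => g p.2.1 * g p.2.2) (μ ⊗ₘ (κ ×ₖ κ)) :=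
    integrable_of_bound hcont.aestronglyMeasurable (‖g‖ * ‖g‖) (fun p => by
      rw [abs_mul]
      exact mul_le_mul (abs_apply_le_norm g _) (abs_apply_le_norm g _) (abs_nonneg _)
        (norm_nonneg g))
  rw [MeasureTheory.Measure.integral_compProd hint]
  refine integral_congr_ae (Eventually.of_forall fun x => ?_)
  dsimp only
  rw [ProbabilityTheory.Kernel.prod_apply]
  rw [MeasureTheory.integral_prod_mul (fun y => g y) (fun z => g z), sq]

lemma comp_cross (μ : Measure V) [IsProbabilityMeasure μ] (κ : ProbabilityTheory.Kernel V W)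
    [IsMarkovKernel κ] (ψ : BoundedContinuousFunction V ℝ) (g : BoundedContinuousFunction W ℝ) :
    ∫ p : V × W × W, ψ p.1 * g p.2.1 ∂(μ ⊗ₘ (κ ×ₖ κ)) =
      ∫ x, ψ x * ∫ y, g y ∂κ x ∂μ := by
  have hcont : Continuous fun p : V × W × W => ψ p.1 * g p.2.1 :=
    ((ψ.continuous.comp continuous_fst).mul
      (g.continuous.comp (continuous_fst.comp continuous_snd)))
  have hint : Integrable (fun p : V × W × W => ψ p.1 * g p.2.1) (μ ⊗ₘ (κ ×ₖ κ)) :=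
    integrable_of_bound hcont.aestronglyMeasurable (‖ψ‖ * ‖g‖) (fun p => by
      rw [abs_mul]
      exact mul_le_mul (abs_apply_le_norm ψ _) (abs_apply_le_norm g _) (abs_nonneg _)
        (norm_nonneg ψ))
  rw [MeasureTheory.Measure.integral_compProd hint]
  refine integral_congr_ae (Eventually.of_forall fun x => ?_)
  dsimp only
  rw [ProbabilityTheory.Kernel.prod_apply]
  rw [integral_const_mul]
  have := MeasureTheory.integral_prod_mul (μ := κ x) (ν := κ x)
    (fun y => (g y : ℝ)) (fun _ => (1 : ℝ))
  simp only [mul_one, integral_const, measure_univ, ENNReal.toReal_one, one_smul, smul_eq_mul,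
    probReal_univ]
    at this
  rw [this]

end compProdCalc

section stepA

variable {V W : Type*}
  [TopologicalSpace V] [PolishSpace V] [MeasurableSpace V] [BorelSpace V]
  [TopologicalSpace W] [PolishSpace W] [MeasurableSpace W] [BorelSpace W]

lemma l2_tendsto (μ : Measure V) [IsProbabilityMeasure μ]
    (K : ℕ → ProbabilityTheory.Kernel V W) (Kinf : ProbabilityTheory.Kernel V W)
    [∀ n, IsMarkovKernel (K n)] [IsMarkovKernel Kinf]
    (hconv : ∀ f : BoundedContinuousFunction (V × W × W) ℝ,
      Tendsto (fun n => ∫ p, f p ∂(μ ⊗ₘ ((K n) ×ₖ (K n)))) atTop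
        (nhds (∫ p, f p ∂(μ ⊗ₘ (Kinf ×ₖ Kinf)))))
    (g : BoundedContinuousFunction W ℝ) :
    Tendsto (fun n => ∫ x, (∫ y, g y ∂K n x - ∫ y, g y ∂Kinf x) ^ 2 ∂μ) atTop (nhds 0) := by
  classical
  set A : ℕ → V → ℝ := fun n x => ∫ y, g y ∂K n x with hA
  set B : V → ℝ := fun x => ∫ y, g y ∂Kinf x with hB
  have measA : ∀ n, StronglyMeasurable (A n) := fun n =>
    stronglyMeasurable_integral_kernel (K n) g
  have measB : StronglyMeasurable B := stronglyMeasurable_integral_kernel Kinf g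
  have boundA : ∀ n x, |A n x| ≤ ‖g‖ := fun n x => abs_integral_le (K n x) g
  have boundB : ∀ x, |B x| ≤ ‖g‖ := fun x => abs_integral_le (Kinf x) g
  -- integrabilities
  have intA2 : ∀ n, Integrable (fun x => (A n x) ^ 2) μ := fun n =>
    integrable_of_bound ((measA n).pow 2).aestronglyMeasurable (‖g‖ ^ 2) (fun x => by
      rw [abs_pow]
      exact pow_le_pow_left₀ (abs_nonneg _) (boundA n x) 2)
  have intB2 : Integrable (fun x => (B x) ^ 2) μ :=
    integrable_of_bound (measB.pow 2).aestronglyMeasurable (‖g‖ ^ 2) (fun x => by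
      rw [abs_pow]
      exact pow_le_pow_left₀ (abs_nonneg _) (boundB x) 2)
  have intAB : ∀ n, Integrable (fun x => A n x * B x) μ := fun n =>
    integrable_of_bound ((measA n).mul measB).aestronglyMeasurable (‖g‖ * ‖g‖) (fun x => by
      rw [abs_mul]
      exact mul_le_mul (boundA n x) (boundB x) (abs_nonneg _) (norm_nonneg g))
  -- limit of squares
  have hS : Tendsto (fun n => ∫ x, (A n x) ^ 2 ∂μ) atTop (nhds (∫ x, (B x) ^ 2 ∂μ)) := by
    have hcYZ : Continuous fun p : V × W × W => g p.2.1 * g p.2.2 :=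
      ((g.continuous.comp (continuous_fst.comp continuous_snd)).mul
        (g.continuous.comp (continuous_snd.comp continuous_snd)))
    have hb : ∀ p : V × W × W, |g p.2.1 * g p.2.2| ≤ ‖g‖ * ‖g‖ := fun p => by
      rw [abs_mul]
      exact mul_le_mul (abs_apply_le_norm g _) (abs_apply_le_norm g _) (abs_nonneg _)
        (norm_nonneg g)
    have h1 := hconv (mkBCF _ hcYZ (‖g‖ * ‖g‖) hb)
    simp only [mkBCF_apply] at h1
    rw [comp_sq μ Kinf g] at h1
    have : (fun n => ∫ p : V × W × W, g p.2.1 * g p.2.2 ∂(μ ⊗ₘ ((K n) ×ₖ (K n)))) =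
        fun n => ∫ x, (A n x) ^ 2 ∂μ := funext fun n => comp_sq μ (K n) g
    rwa [this] at h1
  -- cross limits against all bounded continuous ψ
  have hpsi : ∀ ψ : BoundedContinuousFunction V ℝ,
      Tendsto (fun n => ∫ x, ψ x * A n x ∂μ) atTop (nhds (∫ x, ψ x * B x ∂μ)) := by
    intro ψ
    have hcX : Continuous fun p : V × W × W => ψ p.1 * g p.2.1 :=
      ((ψ.continuous.comp continuous_fst).mul
        (g.continuous.comp (continuous_fst.comp continuous_snd)))
    have hb : ∀ p : V × W × W, |ψ p.1 * g p.2.1| ≤ ‖ψ‖ * ‖g‖ := fun p => by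
      rw [abs_mul]
      exact mul_le_mul (abs_apply_le_norm ψ _) (abs_apply_le_norm g _) (abs_nonneg _)
        (norm_nonneg ψ)
    have h1 := hconv (mkBCF _ hcX (‖ψ‖ * ‖g‖) hb)
    simp only [mkBCF_apply] at h1
    rw [comp_cross μ Kinf ψ g] at h1
    have : (fun n => ∫ p : V × W × W, ψ p.1 * g p.2.1 ∂(μ ⊗ₘ ((K n) ×ₖ (K n)))) =
        fun n => ∫ x, ψ x * A n x ∂μ := funext fun n => comp_cross μ (K n) ψ g
    rwa [this] at h1
  -- the cross term against B itself
  have hBint : Integrable B μ := integrable_of_bound measB.aestronglyMeasurable ‖g‖ boundB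
  have hX : Tendsto (fun n => ∫ x, A n x * B x ∂μ) atTop (nhds (∫ x, (B x) ^ 2 ∂μ)) := by
    rw [Metric.tendsto_atTop]
    intro ε hε
    have hδ : 0 < ε / (3 * (‖g‖ + 1)) := by positivity
    set δ := ε / (3 * (‖g‖ + 1)) with hδdef
    letI := TopologicalSpace.upgradeIsCompletelyMetrizable V
    obtain ⟨ψ, hψ1, hψint⟩ := hBint.exists_boundedContinuous_integral_sub_le hδ
    have hψmeas : AEStronglyMeasurable (fun x => ψ x) μ := ψ.continuous.aestronglyMeasurable
    have intψA : ∀ n, Integrable (fun x => ψ x * A n x) μ := fun n =>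
      integrable_of_bound (hψmeas.mul (measA n).aestronglyMeasurable) (‖ψ‖ * ‖g‖) (fun x => by
        rw [abs_mul]
        exact mul_le_mul (abs_apply_le_norm ψ _) (boundA n x) (abs_nonneg _) (norm_nonneg ψ))
    have intψB : Integrable (fun x => ψ x * B x) μ :=
      integrable_of_bound (hψmeas.mul measB.aestronglyMeasurable) (‖ψ‖ * ‖g‖) (fun x => by
        rw [abs_mul]
        exact mul_le_mul (abs_apply_le_norm ψ _) (boundB x) (abs_nonneg _) (norm_nonneg ψ))
    have intBψ : Integrable (fun x => ‖B x - ψ x‖) μ := (hBint.sub (ψ.integrable μ)).norm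
    have hBψnn : 0 ≤ ∫ x, ‖B x - ψ x‖ ∂μ := integral_nonneg fun x => norm_nonneg _
    have hgn : (0:ℝ) ≤ ‖g‖ := norm_nonneg g
    have key1 : ∀ n, |∫ x, A n x * B x ∂μ - ∫ x, ψ x * A n x ∂μ| ≤ ε / 3 := by
      intro n
      rw [← integral_sub (intAB n) (intψA n)]
      have step : |∫ x, (A n x * B x - ψ x * A n x) ∂μ| ≤ (‖g‖ + 1) * δ := by
        calc |∫ x, (A n x * B x - ψ x * A n x) ∂μ|
            ≤ ∫ x, |A n x * B x - ψ x * A n x| ∂μ := by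
              simpa [Real.norm_eq_abs] using norm_integral_le_integral_norm (μ := μ)
                (f := fun x => A n x * B x - ψ x * A n x)
          _ ≤ ∫ x, ‖g‖ * ‖B x - ψ x‖ ∂μ := by
              refine integral_mono ((intAB n).sub (intψA n)).abs (intBψ.const_mul ‖g‖)
                (fun x => ?_)
              have hre : A n x * B x - ψ x * A n x = A n x * (B x - ψ x) := by ring
              rw [hre, abs_mul, Real.norm_eq_abs]
              exact mul_le_mul (boundA n x) le_rfl (abs_nonneg _) hgn
          _ = ‖g‖ * ∫ x, ‖B x - ψ x‖ ∂μ := integral_const_mul _ _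
          _ ≤ (‖g‖ + 1) * δ :=
              mul_le_mul (by linarith) hψ1 hBψnn (by linarith)
      calc |∫ x, (A n x * B x - ψ x * A n x) ∂μ| ≤ (‖g‖ + 1) * δ := step
        _ = ε / 3 := by rw [hδdef]; field_simp
    have key2 : |∫ x, ψ x * B x ∂μ - ∫ x, (B x) ^ 2 ∂μ| ≤ ε / 3 := by
      rw [← integral_sub intψB intB2]
      have step : |∫ x, (ψ x * B x - (B x) ^ 2) ∂μ| ≤ (‖g‖ + 1) * δ := by
        calc |∫ x, (ψ x * B x - (B x) ^ 2) ∂μ|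
            ≤ ∫ x, |ψ x * B x - (B x) ^ 2| ∂μ := by
              simpa [Real.norm_eq_abs] using norm_integral_le_integral_norm (μ := μ)
                (f := fun x => ψ x * B x - (B x) ^ 2)
          _ ≤ ∫ x, ‖g‖ * ‖B x - ψ x‖ ∂μ := by
              refine integral_mono (intψB.sub intB2).abs (intBψ.const_mul ‖g‖) (fun x => ?_)
              have hre : ψ x * B x - (B x) ^ 2 = B x * (ψ x - B x) := by ring
              rw [hre, abs_mul, Real.norm_eq_abs, abs_sub_comm (B x) (ψ x)]
              exact mul_le_mul (boundB x) le_rfl (abs_nonneg _) hgn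
          _ = ‖g‖ * ∫ x, ‖B x - ψ x‖ ∂μ := integral_const_mul _ _
          _ ≤ (‖g‖ + 1) * δ := mul_le_mul (by linarith) hψ1 hBψnn (by linarith)
      calc |∫ x, (ψ x * B x - (B x) ^ 2) ∂μ| ≤ (‖g‖ + 1) * δ := step
        _ = ε / 3 := by rw [hδdef]; field_simp
    obtain ⟨N, hN⟩ := (Metric.tendsto_atTop.mp (hpsi ψ)) (ε / 3) (by positivity)
    refine ⟨N, fun n hn => ?_⟩
    have hmid := hN n hn
    rw [Real.dist_eq] at hmid ⊢
    have t1 : |∫ x, A n x * B x ∂μ - ∫ x, (B x) ^ 2 ∂μ| ≤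
        |∫ x, A n x * B x ∂μ - ∫ x, ψ x * A n x ∂μ| +
        |∫ x, ψ x * A n x ∂μ - ∫ x, ψ x * B x ∂μ| +
        |∫ x, ψ x * B x ∂μ - ∫ x, (B x) ^ 2 ∂μ| := by
      have := abs_sub_le (∫ x, A n x * B x ∂μ) (∫ x, ψ x * A n x ∂μ) (∫ x, (B x) ^ 2 ∂μ)
      have := abs_sub_le (∫ x, ψ x * A n x ∂μ) (∫ x, ψ x * B x ∂μ) (∫ x, (B x) ^ 2 ∂μ)
      linarith [abs_sub_le (∫ x, A n x * B x ∂μ) (∫ x, ψ x * A n x ∂μ) (∫ x, (B x) ^ 2 ∂μ),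
        abs_sub_le (∫ x, ψ x * A n x ∂μ) (∫ x, ψ x * B x ∂μ) (∫ x, (B x) ^ 2 ∂μ)]
    have := key1 n
    linarith
  -- expansion and conclusion
  have expand : ∀ n, ∫ x, (A n x - B x) ^ 2 ∂μ =
      ∫ x, (A n x) ^ 2 ∂μ - 2 * ∫ x, A n x * B x ∂μ + ∫ x, (B x) ^ 2 ∂μ := by
    intro n
    have hptw : ∀ x, (A n x - B x) ^ 2 = ((A n x) ^ 2 - 2 * (A n x * B x)) + (B x) ^ 2 :=
      fun x => by ring
    simp_rw [hptw]
    have i1 : Integrable (fun x => (A n x) ^ 2 - 2 * (A n x * B x)) μ := by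
      exact (intA2 n).sub ((intAB n).const_mul 2)
    rw [integral_add i1 intB2, integral_sub (intA2 n) ((intAB n).const_mul 2),
      integral_const_mul]
  have final := (hS.sub (hX.const_mul 2)).add
    (tendsto_const_nhds (x := ∫ x, (B x) ^ 2 ∂μ) (f := atTop (α := ℕ)))
  have hzero : (∫ x, (B x) ^ 2 ∂μ) - 2 * (∫ x, (B x) ^ 2 ∂μ) + (∫ x, (B x) ^ 2 ∂μ) = 0 := by
    ring
  rw [hzero] at final
  exact Tendsto.congr (fun n => (expand n).symm) final

end stepA

open scoped NNReal ENNReal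

section portmanteau

variable {W : Type*} [MetricSpace W]

/-- Test functions indexed by finite unions of basic opens and a scale parameter. -/
noncomputable def testFun (e : ℕ → Set W) (s : Finset ℕ) (m : ℕ) :
    BoundedContinuousFunction W ℝ :=
  mkBCF (fun y => min 1 ((m : ℝ) * Metric.infDist y (⋃ i ∈ s, e i)ᶜ))
    (continuous_const.min (continuous_const.mul (Metric.continuous_infDist_pt _))) 1
    (fun y => by
      have h0 : (0:ℝ) ≤ (m : ℝ) * Metric.infDist y (⋃ i ∈ s, e i)ᶜ :=
        mul_nonneg (Nat.cast_nonneg m) Metric.infDist_nonneg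
      rw [abs_of_nonneg (le_min zero_le_one h0)]
      exact min_le_left _ _)

lemma testFun_apply (e : ℕ → Set W) (s : Finset ℕ) (m : ℕ) (y : W) :
    testFun e s m y = min 1 ((m : ℝ) * Metric.infDist y (⋃ i ∈ s, e i)ᶜ) := rfl

lemma portmanteau_aux [SecondCountableTopology W] [MeasurableSpace W] [BorelSpace W]
    (e : ℕ → Set W) (he_open : ∀ n, IsOpen (e n))
    (he_basis : ∀ G : Set W, IsOpen G → ∀ y ∈ G, ∃ n, y ∈ e n ∧ e n ⊆ G)
    (ν : Measure W) [IsProbabilityMeasure ν] (νs : ℕ → Measure W)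
    [∀ n, IsProbabilityMeasure (νs n)]
    (h : ∀ (s : Finset ℕ) (m : ℕ),
      Tendsto (fun l => ∫ y, testFun e s m y ∂νs l) atTop (nhds (∫ y, testFun e s m y ∂ν)))
    (g : BoundedContinuousFunction W ℝ) :
    Tendsto (fun l => ∫ y, g y ∂νs l) atTop (nhds (∫ y, g y ∂ν)) := by
  classical
  have main : ∀ G : Set W, IsOpen G → ν G ≤ atTop.liminf fun l => νs l G := by
    intro G hG
    have claim : ∀ s : Finset ℕ, (⋃ i ∈ s, e i) ⊆ G →
        ν (⋃ i ∈ s, e i) ≤ atTop.liminf fun l => νs l G := by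
      intro s hsG
      set U : Set W := ⋃ i ∈ s, e i with hUdef
      have hUopen : IsOpen U := isOpen_biUnion fun i _ => he_open i
      have hUmeas : MeasurableSet U := hUopen.measurableSet
      by_cases hUuniv : U = Set.univ
      · have hGuniv : G = Set.univ := Set.eq_univ_of_univ_subset (hUuniv ▸ hsG)
        rw [hUuniv, hGuniv]
        simp only [measure_univ]
        simp [Filter.liminf_const]
      · have hUcne : (Uᶜ).Nonempty := Set.nonempty_compl.mpr hUuniv
        have hUc_closed : IsClosed (Uᶜ) := hUopen.isClosed_compl
        have f_le_ind : ∀ (m : ℕ) (y : W),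
            testFun e s m y ≤ U.indicator (fun _ => (1:ℝ)) y := by
          intro m y
          by_cases hy : y ∈ U
          · rw [Set.indicator_of_mem hy, testFun_apply]
            exact min_le_left _ _
          · rw [Set.indicator_of_notMem hy, testFun_apply, ← hUdef]
            have hd : Metric.infDist y (Uᶜ) = 0 := Metric.infDist_zero_of_mem hy
            simp [hd]
        have ind_int : ∀ (ρ : Measure W) [IsProbabilityMeasure ρ],
            Integrable (U.indicator fun _ => (1:ℝ)) ρ := fun ρ _ =>
          (integrable_indicator_iff hUmeas).mpr (integrableOn_const
            (measure_ne_top ρ U))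
        have ind_eq : ∀ (ρ : Measure W),
            ∫ y, U.indicator (fun _ => (1:ℝ)) y ∂ρ = (ρ U).toReal := fun ρ => by
          rw [integral_indicator_const (1:ℝ) hUmeas]; simp [measureReal_def]
        have step1 : ∀ m : ℕ, ENNReal.ofReal (∫ y, testFun e s m y ∂ν) ≤
            atTop.liminf fun l => νs l U := by
          intro m
          have hlim : Tendsto (fun l => ENNReal.ofReal (∫ y, testFun e s m y ∂νs l)) atTop
              (nhds (ENNReal.ofReal (∫ y, testFun e s m y ∂ν))) :=
            (ENNReal.continuous_ofReal.tendsto _).comp (h s m)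
          rw [← hlim.liminf_eq]
          refine Filter.liminf_le_liminf (Eventually.of_forall fun l => ?_)
          have hle : ∫ y, testFun e s m y ∂νs l ≤ (νs l U).toReal := by
            calc ∫ y, testFun e s m y ∂νs l
                ≤ ∫ y, U.indicator (fun _ => (1:ℝ)) y ∂νs l :=
                  integral_mono ((testFun e s m).integrable (νs l)) (ind_int (νs l))
                    (fun y => f_le_ind m y)
              _ = (νs l U).toReal := ind_eq (νs l)
          calc ENNReal.ofReal (∫ y, testFun e s m y ∂νs l)
              ≤ ENNReal.ofReal (νs l U).toReal := ENNReal.ofReal_le_ofReal hle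
            _ = νs l U := ENNReal.ofReal_toReal (measure_ne_top _ _)
        have step2 : Tendsto (fun m => ∫ y, testFun e s m y ∂ν) atTop
            (nhds (ν U).toReal) := by
          have hmono : ∀ᵐ y ∂ν, Monotone fun m : ℕ => testFun e s m y := by
            refine Eventually.of_forall fun y m m' hmm' => ?_
            simp only [testFun_apply, ← hUdef]
            exact min_le_min le_rfl (mul_le_mul_of_nonneg_right (Nat.cast_le.mpr hmm')
              Metric.infDist_nonneg)
          have htend : ∀ᵐ y ∂ν, Tendsto (fun m : ℕ => testFun e s m y) atTop
              (nhds (U.indicator (fun _ => (1:ℝ)) y)) := by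
            refine Eventually.of_forall fun y => ?_
            by_cases hy : y ∈ U
            · have hd : 0 < Metric.infDist y (Uᶜ) :=
                (hUc_closed.notMem_iff_infDist_pos hUcne).mp (by simpa using hy)
              have hto : Tendsto (fun m : ℕ => (m : ℝ) * Metric.infDist y (Uᶜ)) atTop atTop :=
                Tendsto.atTop_mul_const hd tendsto_natCast_atTop_atTop
              rw [Set.indicator_of_mem hy]
              refine Tendsto.congr' ?_ tendsto_const_nhds
              filter_upwards [hto.eventually_ge_atTop 1] with m hm
              simp only [testFun_apply, ← hUdef, min_eq_left hm]
            · rw [Set.indicator_of_notMem hy]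
              have hd : Metric.infDist y (Uᶜ) = 0 := Metric.infDist_zero_of_mem hy
              refine Tendsto.congr' (Eventually.of_forall fun m => ?_) tendsto_const_nhds
              simp only [testFun_apply, ← hUdef, hd, mul_zero]
              simp
          have := integral_tendsto_of_tendsto_of_monotone
            (fun m => (testFun e s m).integrable ν) (ind_int ν) hmono htend
          rwa [ind_eq ν] at this
        have hνU : ν U ≤ atTop.liminf fun l => νs l U := by
          have hto : Tendsto (fun m => ENNReal.ofReal (∫ y, testFun e s m y ∂ν)) atTop
              (nhds (ENNReal.ofReal (ν U).toReal)) :=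
            (ENNReal.continuous_ofReal.tendsto _).comp step2
          rw [ENNReal.ofReal_toReal (measure_ne_top ν U)] at hto
          exact le_of_tendsto' hto step1
        exact hνU.trans (Filter.liminf_le_liminf (Eventually.of_forall fun l =>
          measure_mono hsG))
    set sC : ℕ → Finset ℕ := fun k => (Finset.range k).filter (fun i => e i ⊆ G) with hsC
    have hsub : ∀ k, (⋃ i ∈ sC k, e i) ⊆ G := by
      intro k
      refine Set.iUnion₂_subset fun i hi => ?_
      exact (Finset.mem_filter.mp hi).2
    have hmono : Monotone fun k => ⋃ i ∈ sC k, e i := by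
      intro k k' hkk'
      refine Set.iUnion₂_subset fun i hi => ?_
      have h1 := Finset.mem_filter.mp hi
      exact Set.subset_biUnion_of_mem (u := fun i => e i) (Finset.mem_filter.mpr
        ⟨Finset.mem_range.mpr (lt_of_lt_of_le (Finset.mem_range.mp h1.1) hkk'), h1.2⟩)
    have hunion : (⋃ k, ⋃ i ∈ sC k, e i) = G := by
      apply Set.Subset.antisymm (Set.iUnion_subset hsub)
      intro y hy
      obtain ⟨n, hyn, hnG⟩ := he_basis G hG y hy
      refine Set.mem_iUnion.mpr ⟨n + 1, ?_⟩
      exact Set.mem_biUnion (Finset.mem_filter.mpr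
        ⟨Finset.mem_range.mpr (Nat.lt_succ_self n), hnG⟩) hyn
    have htν := tendsto_measure_iUnion_atTop (μ := ν) hmono
    rw [hunion] at htν
    exact le_of_tendsto' htν fun k => claim (sC k) (hsub k)
  -- package as ProbabilityMeasure and conclude
  let P : ProbabilityMeasure W := ⟨ν, inferInstance⟩
  let Ps : ℕ → ProbabilityMeasure W := fun l => ⟨νs l, inferInstance⟩
  have hP : Tendsto Ps atTop (nhds P) := by
    apply MeasureTheory.tendsto_of_forall_isOpen_le_liminf
    intro G hG
    have obs := main G hG
    have aux : (ENNReal.ofNNReal (atTop.liminf fun l => Ps l G)) =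
        atTop.liminf fun l => ((Ps l G : ℝ≥0) : ℝ≥0∞) := by
      refine Monotone.map_liminf_of_continuousAt (F := atTop) ENNReal.coe_mono
        (fun l => Ps l G) ENNReal.continuous_coe.continuousAt ?_ ?_
      · exact Filter.IsBoundedUnder.isCoboundedUnder_ge ⟨1, by simp⟩
      · exact ⟨0, by simp⟩
    rw [← ENNReal.coe_le_coe, aux]
    simp only [ProbabilityMeasure.ennreal_coeFn_eq_coeFn_toMeasure]
    exact obs
  have := ProbabilityMeasure.tendsto_iff_forall_integral_tendsto.mp hP g
  exact this

end portmanteau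

section ennrealAux

open scoped ENNReal

set_option maxHeartbeats 1000000 in
lemma tendsto_tsum_zero_of_le (b : ℕ → ℝ≥0∞) (hb : ∑' i, b i ≠ ⊤)
    (f : ℕ → ℕ → ℝ≥0∞) (hle : ∀ n i, f n i ≤ b i)
    (h0 : ∀ i, Tendsto (fun n => f n i) atTop (nhds 0)) :
    Tendsto (fun n => ∑' i, f n i) atTop (nhds 0) := by
  rw [ENNReal.tendsto_nhds_zero]
  intro ε hε
  have h2 : (0 : ℝ≥0∞) < ε / 2 := ENNReal.half_pos hε.ne'
  obtain ⟨N, hN⟩ : ∃ N, ∑' i, b (i + N) ≤ ε / 2 := by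
    have htail := ENNReal.tendsto_sum_nat_add b hb
    obtain ⟨N, hN⟩ := Filter.eventually_atTop.mp ((ENNReal.tendsto_nhds_zero.mp htail) _ h2)
    exact ⟨N, hN N le_rfl⟩
  have hhead : Tendsto (fun n => ∑ i ∈ Finset.range N, f n i) atTop (nhds 0) := by
    have := tendsto_finset_sum (Finset.range N) (fun i _ => h0 i)
    simpa using this
  filter_upwards [(ENNReal.tendsto_nhds_zero.mp hhead) _ h2] with n hn
  refine ENNReal.tsum_le_of_sum_range_le fun M => ?_
  rcases le_total M N with hMN | hNM
  · calc ∑ i ∈ Finset.range M, f n i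
        ≤ ∑ i ∈ Finset.range N, f n i :=
          Finset.sum_le_sum_of_subset (Finset.range_subset_range.mpr hMN)
      _ ≤ ε / 2 := hn
      _ ≤ ε := ENNReal.half_le_self
  · have hsplit : ∑ i ∈ Finset.range M, f n i =
        ∑ i ∈ Finset.range N, f n i + ∑ i ∈ Finset.Ico N M, f n i := by
      rw [Finset.range_eq_Ico, ← Finset.sum_Ico_consecutive _ (Nat.zero_le N) hNM,
        ← Finset.range_eq_Ico]
    have htail2 : ∑ i ∈ Finset.Ico N M, f n i ≤ ∑' j, b (j + N) := by
      calc ∑ i ∈ Finset.Ico N M, f n i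
          ≤ ∑ i ∈ Finset.Ico N M, b i := Finset.sum_le_sum fun i _ => hle n i
        _ = ∑ j ∈ Finset.range (M - N), b (N + j) := Finset.sum_Ico_eq_sum_range _ _ _
        _ = ∑ j ∈ Finset.range (M - N), b (j + N) :=
          Finset.sum_congr rfl fun j _ => by rw [add_comm]
        _ ≤ ∑' j, b (j + N) := ENNReal.sum_le_tsum _
    rw [hsplit]
    calc ∑ i ∈ Finset.range N, f n i + ∑ i ∈ Finset.Ico N M, f n i
        ≤ ε / 2 + ε / 2 := add_le_add hn (htail2.trans hN)
      _ = ε := ENNReal.add_halves ε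

lemma tendsto_zero_of_min_one_tendsto_zero (t : ℕ → ℝ≥0∞)
    (h : Tendsto (fun l => min 1 (t l)) atTop (nhds 0)) :
    Tendsto t atTop (nhds 0) := by
  rw [ENNReal.tendsto_nhds_zero]
  intro ε hε
  have hε' : (0 : ℝ≥0∞) < min ε 2⁻¹ := lt_min hε (by simp)
  filter_upwards [(ENNReal.tendsto_nhds_zero.mp h) _ hε'] with l hl
  rcases le_total (t l) 1 with ht | ht
  · rw [min_eq_right ht] at hl
    exact hl.trans (min_le_left _ _)
  · exfalso
    rw [min_eq_left ht] at hl
    have h1 : (1 : ℝ≥0∞) ≤ 2⁻¹ := hl.trans (min_le_right _ _)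
    have h2 : (2⁻¹ : ℝ≥0∞) < 1 := ENNReal.inv_lt_one.mpr ENNReal.one_lt_two
    exact absurd h1 (not_le.mpr h2)

end ennrealAux


/-- if the measures `m_n := μ(dx) K_n(x,dy) K_n(x,dz)` converge weakly to
`m_∞ := μ(dx) K_∞(x,dy) K_∞(x,dz)` on `V × W × W`, then there is a subsequence along which,
for `μ`-almost every `x`, the kernels `K_n(x, ·)` converge weakly to `K_∞(x, ·)`. -/
theorem stmt_0
    {V W : Type*}
    [TopologicalSpace V] [PolishSpace V] [MeasurableSpace V] [BorelSpace V]
    [TopologicalSpace W] [PolishSpace W] [MeasurableSpace W] [BorelSpace W]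
    (μ : Measure V) [IsProbabilityMeasure μ]
    (K : ℕ → Kernel V W) (Kinf : Kernel V W)
    [∀ n, IsMarkovKernel (K n)] [IsMarkovKernel Kinf]
    (hconv : ∀ f : BoundedContinuousFunction (V × W × W) ℝ,
      Tendsto (fun n => ∫ p, f p ∂(μ ⊗ₘ ((K n) ×ₖ (K n)))) atTop
        (nhds (∫ p, f p ∂(μ ⊗ₘ (Kinf ×ₖ Kinf))))) :
    ∃ φ : ℕ → ℕ, StrictMono φ ∧
      ∀ᵐ x ∂μ, ∀ g : BoundedContinuousFunction W ℝ,
        Tendsto (fun l => ∫ y, g y ∂(K (φ l) x)) atTop (nhds (∫ y, g y ∂(Kinf x))) := by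
  classical
  letI := TopologicalSpace.upgradeIsCompletelyMetrizable W
  -- an enumerated basis of opens for W
  obtain ⟨e, he_open, he_basis⟩ : ∃ e : ℕ → Set W, (∀ n, IsOpen (e n)) ∧
      ∀ G : Set W, IsOpen G → ∀ y ∈ G, ∃ n, y ∈ e n ∧ e n ⊆ G := by
    have hcb : ((TopologicalSpace.countableBasis W) ∪ {(∅ : Set W)}).Countable :=
      (TopologicalSpace.countable_countableBasis W).union (Set.countable_singleton _)
    obtain ⟨e, he⟩ := hcb.exists_eq_range ⟨∅, Or.inr rfl⟩
    refine ⟨e, fun n => ?_, fun G hG y hy => ?_⟩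
    · have hmem : e n ∈ TopologicalSpace.countableBasis W ∪ {(∅ : Set W)} := by
        rw [he]; exact Set.mem_range_self n
      rcases hmem with hb | hb
      · exact TopologicalSpace.isOpen_of_mem_countableBasis hb
      · rw [Set.mem_singleton_iff] at hb; rw [hb]; exact isOpen_empty
    · obtain ⟨v, hvB, hyv, hvG⟩ :=
        (TopologicalSpace.isBasis_countableBasis W).exists_subset_of_mem_open hy hG
      have hv : v ∈ Set.range e := by rw [← he]; exact Or.inl hvB
      obtain ⟨n, rfl⟩ := hv
      exact ⟨n, hyv, hvG⟩
  -- enumerate the test family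
  obtain ⟨τ, hτ⟩ := exists_surjective_nat (Finset ℕ × ℕ)
  set Gf : ℕ → BoundedContinuousFunction W ℝ := fun k => testFun e (τ k).1 (τ k).2 with hGf
  set A : ℕ → ℕ → V → ℝ := fun n k x => ∫ y, Gf k y ∂K n x with hA
  set B : ℕ → V → ℝ := fun k x => ∫ y, Gf k y ∂Kinf x with hB
  have measA : ∀ n k, Measurable (fun x => A n k x) := fun n k =>
    (stronglyMeasurable_integral_kernel (K n) (Gf k)).measurable
  have measB : ∀ k, Measurable (fun x => B k x) := fun k =>
    (stronglyMeasurable_integral_kernel Kinf (Gf k)).measurable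
  have hL2 : ∀ k, Tendsto (fun n => ∫ x, (A n k x - B k x) ^ 2 ∂μ) atTop (nhds 0) :=
    fun k => l2_tendsto μ K Kinf hconv (Gf k)
  set d2 : ℕ → ℕ → V → ℝ≥0∞ := fun n k x => ENNReal.ofReal ((A n k x - B k x) ^ 2) with hd2
  have measd2 : ∀ n k, Measurable (d2 n k) := fun n k =>
    ENNReal.measurable_ofReal.comp (((measA n k).sub (measB k)).pow_const 2)
  set D : ℕ → V → ℝ≥0∞ := fun n x => ∑' k, (2⁻¹ : ℝ≥0∞) ^ k * min 1 (d2 n k x) with hD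
  have measterm : ∀ n k, Measurable fun x => (2⁻¹ : ℝ≥0∞) ^ k * min 1 (d2 n k x) := fun n k =>
    (measurable_const.min (measd2 n k)).const_mul _
  have measD : ∀ n, Measurable (D n) := fun n => Measurable.ennreal_tsum (measterm n)
  set c : ℕ → ℕ → ℝ≥0∞ := fun n k => ∫⁻ x, min 1 (d2 n k x) ∂μ with hc
  have hpow_ne0 : ∀ k : ℕ, ((2 : ℝ≥0∞)⁻¹) ^ k ≠ 0 := fun k =>
    pow_ne_zero k (by simp)
  have hpow_netop : ∀ k : ℕ, ((2 : ℝ≥0∞)⁻¹) ^ k ≠ ⊤ := fun k =>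
    ENNReal.pow_ne_top (by simp)
  have hgeom : ∑' k : ℕ, ((2 : ℝ≥0∞)⁻¹) ^ k ≠ ⊤ := by
    rw [ENNReal.tsum_geometric, ENNReal.one_sub_inv_two]
    simp
  have hDl : ∀ n, ∫⁻ x, D n x ∂μ = ∑' k, (2⁻¹ : ℝ≥0∞) ^ k * c n k := by
    intro n
    rw [hD]
    rw [lintegral_tsum fun k => (measterm n k).aemeasurable]
    exact tsum_congr fun k => lintegral_const_mul _ (measurable_const.min (measd2 n k))
  have hcle : ∀ n k, c n k ≤ 1 := by
    intro n k
    calc ∫⁻ x, min 1 (d2 n k x) ∂μ ≤ ∫⁻ _, 1 ∂μ := lintegral_mono fun x => min_le_left _ _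
      _ = 1 := by simp
  have boundA : ∀ n k x, |A n k x| ≤ ‖Gf k‖ := fun n k x => abs_integral_le (K n x) (Gf k)
  have boundB : ∀ k x, |B k x| ≤ ‖Gf k‖ := fun k x => abs_integral_le (Kinf x) (Gf k)
  have hint2 : ∀ n k, Integrable (fun x => (A n k x - B k x) ^ 2) μ := by
    intro n k
    refine integrable_of_bound (((measA n k).sub (measB k)).pow_const
      2).aestronglyMeasurable ((2 * ‖Gf k‖) ^ 2) fun x => ?_
    rw [abs_pow]
    refine pow_le_pow_left₀ (abs_nonneg _) ?_ 2
    calc |A n k x - B k x| ≤ |A n k x| + |B k x| := abs_sub _ _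
      _ ≤ 2 * ‖Gf k‖ := by
          have h1 := boundA n k x; have h2 := boundB k x; linarith
  have hc0 : ∀ k, Tendsto (fun n => c n k) atTop (nhds 0) := by
    intro k
    have heq : ∀ n, ENNReal.ofReal (∫ x, (A n k x - B k x) ^ 2 ∂μ) = ∫⁻ x, d2 n k x ∂μ :=
      fun n => MeasureTheory.ofReal_integral_eq_lintegral_ofReal (hint2 n k)
        (Eventually.of_forall fun x => sq_nonneg _)
    have hup : Tendsto (fun n => ∫⁻ x, d2 n k x ∂μ) atTop (nhds 0) := by
      have h1 := (ENNReal.continuous_ofReal.tendsto _).comp (hL2 k)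
      simp only [Function.comp_def, ENNReal.ofReal_zero] at h1
      exact Tendsto.congr (fun n => heq n) h1
    exact tendsto_of_tendsto_of_tendsto_of_le_of_le tendsto_const_nhds hup
      (fun n => zero_le) (fun n => lintegral_mono fun x => min_le_right _ _)
  have hS0 : Tendsto (fun n => ∫⁻ x, D n x ∂μ) atTop (nhds 0) := by
    refine Tendsto.congr (fun n => (hDl n).symm) ?_
    refine tendsto_tsum_zero_of_le (fun k => (2⁻¹ : ℝ≥0∞) ^ k) hgeom _
      (fun n k => ?_) (fun k => ?_)
    · calc (2⁻¹ : ℝ≥0∞) ^ k * c n k ≤ (2⁻¹ : ℝ≥0∞) ^ k * 1 :=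
          mul_le_mul_right (hcle n k) _
        _ = (2⁻¹ : ℝ≥0∞) ^ k := mul_one _
    · have h1 := ENNReal.Tendsto.const_mul (a := (2⁻¹ : ℝ≥0∞) ^ k) (hc0 k)
        (Or.inr (hpow_netop k))
      simpa using h1
  -- extract the subsequence
  obtain ⟨φ, hφmono, hφ⟩ := Filter.extraction_forall_of_eventually
    (P := fun l n => ∫⁻ x, D n x ∂μ ≤ (2⁻¹ : ℝ≥0∞) ^ l)
    (fun l => (ENNReal.tendsto_nhds_zero.mp hS0) _
      (ENNReal.pow_pos (by simp) l))
  refine ⟨φ, hφmono, ?_⟩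
  have hsum : ∑' l, ∫⁻ x, D (φ l) x ∂μ ≠ ⊤ :=
    ne_top_of_le_ne_top hgeom (ENNReal.tsum_le_tsum fun l => hφ l)
  have hHl : ∫⁻ x, ∑' l, D (φ l) x ∂μ = ∑' l, ∫⁻ x, D (φ l) x ∂μ :=
    lintegral_tsum fun l => (measD (φ l)).aemeasurable
  have hae := ae_lt_top (Measurable.ennreal_tsum fun l => measD (φ l))
    (by rw [hHl]; exact hsum)
  filter_upwards [hae] with x hx
  have hDx : Tendsto (fun l => D (φ l) x) atTop (nhds 0) :=
    ENNReal.tendsto_atTop_zero_of_tsum_ne_top hx.ne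
  have hk : ∀ k, Tendsto (fun l => A (φ l) k x) atTop (nhds (B k x)) := by
    intro k
    have h1 : Tendsto (fun l => (2⁻¹ : ℝ≥0∞) ^ k * min 1 (d2 (φ l) k x)) atTop (nhds 0) :=
      tendsto_of_tendsto_of_tendsto_of_le_of_le tendsto_const_nhds hDx
        (fun l => zero_le) (fun l => ENNReal.le_tsum k)
    have h2 : Tendsto (fun l => min 1 (d2 (φ l) k x)) atTop (nhds 0) := by
      have h3 := ENNReal.Tendsto.const_mul (a := ((2⁻¹ : ℝ≥0∞) ^ k)⁻¹) h1
        (Or.inr (by simp [hpow_ne0 k]))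
      rw [mul_zero] at h3
      refine h3.congr fun l => ?_
      rw [← mul_assoc, ENNReal.inv_mul_cancel (hpow_ne0 k) (hpow_netop k), one_mul]
    have h3 : Tendsto (fun l => d2 (φ l) k x) atTop (nhds 0) :=
      tendsto_zero_of_min_one_tendsto_zero _ h2
    have h4 : Tendsto (fun l => (A (φ l) k x - B k x) ^ 2) atTop (nhds 0) := by
      have h5 := (ENNReal.tendsto_toReal (a := 0) (by simp)).comp h3
      simp only [Function.comp_def, ENNReal.toReal_zero] at h5
      refine h5.congr fun l => ?_
      exact ENNReal.toReal_ofReal (sq_nonneg _)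
    have h5 : Tendsto (fun l => |A (φ l) k x - B k x|) atTop (nhds 0) := by
      have h6 := (Real.continuous_sqrt.tendsto 0).comp h4
      simp only [Function.comp_def, Real.sqrt_zero] at h6
      refine h6.congr fun l => ?_
      exact Real.sqrt_sq_eq_abs _
    have h6 : Tendsto (fun l => A (φ l) k x - B k x) atTop (nhds 0) :=
      tendsto_of_tendsto_of_tendsto_of_le_of_le (by simpa using h5.neg) h5
        (fun l => neg_abs_le _) (fun l => le_abs_self _)
    have h7 := h6.add (tendsto_const_nhds (x := B k x) (f := atTop (α := ℕ)))
    simpa using h7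
  intro g
  haveI : ∀ l, IsProbabilityMeasure ((K (φ l)) x) := fun l => inferInstance
  refine portmanteau_aux e he_open he_basis (Kinf x) (fun l => K (φ l) x) ?_ g
  intro s m
  obtain ⟨k, hk'⟩ := hτ (s, m)
  have h8 := hk k
  simp only [hA, hB, hGf, hk'] at h8
  exact h8
end

section
/- Assume that the sequence (m_n)_{n∈ℕ} converges weakly to m_∞ on V × W × W (i.e. integrals of every bounded continuous real function converge). Then for every bounded continuous g : W → ℝ, the functions K_n[g] converge to K_∞[g] strongly in L²(μ), i.e. lim_{n→∞} ∫_V (K_n[g](x) − K_∞[g](x))² μ(dx) = 0. -/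
open MeasureTheory ProbabilityTheory Filter
open scoped ProbabilityTheory

section Aux
variable {V W : Type*}
    [TopologicalSpace V] [PolishSpace V] [MeasurableSpace V] [BorelSpace V]
    [TopologicalSpace W] [PolishSpace W] [MeasurableSpace W] [BorelSpace W]
    (μ : Measure V) [IsProbabilityMeasure μ]

private lemma aux_B (κ : Kernel V W) [IsMarkovKernel κ]
    (h : BoundedContinuousFunction V ℝ) (g : BoundedContinuousFunction W ℝ) :
    ∫ p : V × W × W, h p.1 * g p.2.1 ∂(μ ⊗ₘ (κ ×ₖ κ)) = ∫ x, h x * ∫ y, g y ∂(κ x) ∂μ := by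
  have hint : Integrable (fun p : V × W × W => h p.1 * g p.2.1) (μ ⊗ₘ (κ ×ₖ κ)) := by
    have hc : Continuous (fun p : V × W × W => h p.1 * g p.2.1) := by fun_prop
    exact (BoundedContinuousFunction.ofNormedAddCommGroup _ hc (‖h‖ * ‖g‖)
      (fun p => by
        calc ‖h p.1 * g p.2.1‖ = ‖h p.1‖ * ‖g p.2.1‖ := norm_mul _ _
        _ ≤ ‖h‖ * ‖g‖ := mul_le_mul (h.norm_coe_le_norm _) (g.norm_coe_le_norm _)
            (norm_nonneg _) (norm_nonneg _))).integrable _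
  rw [Measure.integral_compProd hint]
  congr 1
  ext x
  rw [Kernel.prod_apply]
  have h2 := integral_prod_mul (μ := κ x) (ν := κ x) (fun y => h x * g y) (fun _ : W => (1:ℝ))
  simp only [mul_one, integral_const, measure_univ, probReal_univ, ENNReal.toReal_one, one_smul] at h2
  rw [show (fun p : W × W => h x * g p.1) = fun p : W × W => (h x * g p.1) * 1 by
    funext p; ring] at *
  rw [h2, integral_const_mul]

private lemma aux_A (κ : Kernel V W) [IsMarkovKernel κ]
    (g : BoundedContinuousFunction W ℝ) :
    ∫ p : V × W × W, g p.2.1 * g p.2.2 ∂(μ ⊗ₘ (κ ×ₖ κ)) = ∫ x, (∫ y, g y ∂(κ x)) ^ 2 ∂μ := by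
  have hint : Integrable (fun p : V × W × W => g p.2.1 * g p.2.2) (μ ⊗ₘ (κ ×ₖ κ)) := by
    have hc : Continuous (fun p : V × W × W => g p.2.1 * g p.2.2) := by fun_prop
    exact (BoundedContinuousFunction.ofNormedAddCommGroup _ hc (‖g‖ * ‖g‖)
      (fun p => by
        calc ‖g p.2.1 * g p.2.2‖ = ‖g p.2.1‖ * ‖g p.2.2‖ := norm_mul _ _
        _ ≤ ‖g‖ * ‖g‖ := mul_le_mul (g.norm_coe_le_norm _) (g.norm_coe_le_norm _)
            (norm_nonneg _) (norm_nonneg _))).integrable _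
  rw [Measure.integral_compProd hint]
  congr 1
  ext x
  rw [Kernel.prod_apply]
  have h2 := integral_prod_mul (μ := κ x) (ν := κ x) (fun y => g y) (fun y : W => g y)
  simpa [sq] using h2

end Aux

/-- if the measures `m_n := μ(dx) K_n(x,dy) K_n(x,dz)` converge weakly to
`m_∞`, then for every bounded continuous `g : W → ℝ` the functions `K_n[g]` converge to
`K_∞[g]` strongly in `L²(μ)`. -/
theorem stmt_1
    {V W : Type*}
    [TopologicalSpace V] [PolishSpace V] [MeasurableSpace V] [BorelSpace V]
    [TopologicalSpace W] [PolishSpace W] [MeasurableSpace W] [BorelSpace W]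
    (μ : Measure V) [IsProbabilityMeasure μ]
    (K : ℕ → Kernel V W) (Kinf : Kernel V W)
    [∀ n, IsMarkovKernel (K n)] [IsMarkovKernel Kinf]
    (hconv : ∀ f : BoundedContinuousFunction (V × W × W) ℝ,
      Tendsto (fun n => ∫ p, f p ∂(μ ⊗ₘ ((K n) ×ₖ (K n)))) atTop
        (nhds (∫ p, f p ∂(μ ⊗ₘ (Kinf ×ₖ Kinf))))) :
    ∀ g : BoundedContinuousFunction W ℝ,
      Tendsto (fun n => ∫ x, ((∫ y, g y ∂(K n x)) - (∫ y, g y ∂(Kinf x))) ^ 2 ∂μ)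
        atTop (nhds 0) := by
  intro g
  set Fn : ℕ → V → ℝ := fun n x => ∫ y, g y ∂(K n x) with hFn
  set F : V → ℝ := fun x => ∫ y, g y ∂(Kinf x) with hF
  -- measurability and bounds for kernel integrals
  have meas : ∀ (κ : Kernel V W) [IsMarkovKernel κ],
      StronglyMeasurable fun x => ∫ y, g y ∂(κ x) := by
    intro κ _
    exact (g.continuous.comp continuous_snd).stronglyMeasurable.integral_kernel_prod_right'
      (κ := κ)
  have bound : ∀ (κ : Kernel V W) [IsMarkovKernel κ] (x : V),
      |∫ y, g y ∂(κ x)| ≤ ‖g‖ := by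
    intro κ _ x
    rw [← Real.norm_eq_abs]
    calc ‖∫ y, g y ∂(κ x)‖ ≤ ‖g‖ * ((κ x) Set.univ).toReal :=
      norm_integral_le_of_norm_le_const (ae_of_all _ fun y => g.norm_coe_le_norm y)
    _ = ‖g‖ := by simp
  -- integrability of bounded products
  have hprod : ∀ (u v : V → ℝ) (c d : ℝ), StronglyMeasurable u → StronglyMeasurable v →
      (∀ x, |u x| ≤ c) → (∀ x, |v x| ≤ d) → Integrable (fun x => u x * v x) μ := by
    intro u v c d hu hv bu bv
    refine Integrable.mono' (integrable_const (c * d)) (hu.mul hv).aestronglyMeasurable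
      (ae_of_all _ fun x => ?_)
    rw [Real.norm_eq_abs, abs_mul]
    exact mul_le_mul (bu x) (bv x) (abs_nonneg _) ((abs_nonneg (u x)).trans (bu x))
  -- BCF constructions
  let gy : BoundedContinuousFunction (V × W × W) ℝ :=
    g.compContinuous ((ContinuousMap.fst).comp (ContinuousMap.snd))
  let gz : BoundedContinuousFunction (V × W × W) ℝ :=
    g.compContinuous ((ContinuousMap.snd).comp (ContinuousMap.snd))
  -- convergence of aₙ := ∫ Fₙ²
  have ha : Tendsto (fun n => ∫ x, (Fn n x) ^ 2 ∂μ) atTop (nhds (∫ x, (F x) ^ 2 ∂μ)) := by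
    have := hconv (gy * gz)
    have e : ∀ p : V × W × W, (gy * gz) p = g p.2.1 * g p.2.2 := fun p => rfl
    simp only [e] at this
    rw [aux_A μ Kinf g] at this
    simpa only [aux_A μ _ g] using this
  -- convergence of bₙ(h) for bounded continuous h
  have hb : ∀ h : BoundedContinuousFunction V ℝ,
      Tendsto (fun n => ∫ x, h x * Fn n x ∂μ) atTop (nhds (∫ x, h x * F x ∂μ)) := by
    intro h
    let hx : BoundedContinuousFunction (V × W × W) ℝ := h.compContinuous (ContinuousMap.fst)
    have := hconv (hx * gy)
    have e : ∀ p : V × W × W, (hx * gy) p = h p.1 * g p.2.1 := fun p => rfl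
    simp only [e] at this
    rw [aux_B μ Kinf h g] at this
    simpa only [aux_B μ _ h g] using this
  -- integrability facts
  have hFint : Integrable F μ := by
    refine Integrable.mono' (integrable_const ‖g‖) (meas Kinf).aestronglyMeasurable
      (ae_of_all _ fun x => ?_)
    rw [Real.norm_eq_abs]; exact bound Kinf x
  have hFF : Integrable (fun x => F x * F x) μ :=
    hprod F F ‖g‖ ‖g‖ (meas Kinf) (meas Kinf) (bound Kinf) (bound Kinf)
  have hFFn : ∀ n, Integrable (fun x => F x * Fn n x) μ := fun n =>
    hprod F (Fn n) ‖g‖ ‖g‖ (meas Kinf) (meas (K n)) (bound Kinf) (bound (K n))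
  have hFnFn : ∀ n, Integrable (fun x => Fn n x ^ 2) μ := by
    intro n
    have := hprod (Fn n) (Fn n) ‖g‖ ‖g‖ (meas (K n)) (meas (K n)) (bound (K n)) (bound (K n))
    simpa [sq] using this
  -- convergence of cₙ := ∫ F * Fₙ
  have hc : Tendsto (fun n => ∫ x, F x * Fn n x ∂μ) atTop (nhds (∫ x, F x * F x ∂μ)) := by
    rw [Metric.tendsto_atTop]
    intro ε hε
    have hδ : (0:ℝ) < ε / (4 * (‖g‖ + 1)) := by positivity
    letI := TopologicalSpace.upgradeIsCompletelyMetrizable V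
    obtain ⟨h, hh1, hh2⟩ := hFint.exists_boundedContinuous_integral_sub_le hδ
    have hkey : ‖g‖ * (ε / (4 * (‖g‖ + 1))) ≤ ε / 4 := by
      have hne : (‖g‖ + 1) ≠ 0 := by positivity
      have heq : (‖g‖ + 1) * (ε / (4 * (‖g‖ + 1))) = ε / 4 := by
        field_simp
      calc ‖g‖ * (ε / (4 * (‖g‖ + 1))) ≤ (‖g‖ + 1) * (ε / (4 * (‖g‖ + 1))) :=
            mul_le_mul_of_nonneg_right (by linarith [norm_nonneg g]) hδ.le
        _ = ε / 4 := heq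
    have hhb : ∀ x, |h x| ≤ ‖h‖ := fun x => by
      rw [← Real.norm_eq_abs]; exact h.norm_coe_le_norm x
    have hhmeas : StronglyMeasurable (fun x => h x) := h.continuous.stronglyMeasurable
    -- core estimate: for any v measurable bounded by ‖g‖,
    -- |∫ (F - h) * v| ≤ ‖g‖ * δ ≤ ε/4
    have core : ∀ v : V → ℝ, StronglyMeasurable v → (∀ x, |v x| ≤ ‖g‖) →
        |∫ x, F x * v x ∂μ - ∫ x, h x * v x ∂μ| ≤ ε / 4 := by
      intro v hv bv
      have hFv : Integrable (fun x => F x * v x) μ :=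
        hprod F v ‖g‖ ‖g‖ (meas Kinf) hv (bound Kinf) bv
      have hhv : Integrable (fun x => h x * v x) μ :=
        hprod (fun x => h x) v ‖h‖ ‖g‖ hhmeas hv hhb bv
      rw [← integral_sub hFv hhv]
      have e : (fun x => F x * v x - h x * v x) = fun x => (F x - h x) * v x := by
        funext x; ring
      rw [e, ← Real.norm_eq_abs]
      calc ‖∫ x, (F x - h x) * v x ∂μ‖ ≤ ∫ x, ‖(F x - h x) * v x‖ ∂μ :=
            norm_integral_le_integral_norm _
        _ ≤ ∫ x, ‖g‖ * ‖F x - h x‖ ∂μ := by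
            refine integral_mono_of_nonneg (ae_of_all _ fun x => norm_nonneg _)
              ((hFint.sub hh2).norm.const_mul ‖g‖) (ae_of_all _ fun x => ?_)
            show ‖(F x - h x) * v x‖ ≤ ‖g‖ * ‖F x - h x‖
            have hvx : ‖v x‖ ≤ ‖g‖ := by rw [Real.norm_eq_abs]; exact bv x
            calc ‖(F x - h x) * v x‖ = ‖F x - h x‖ * ‖v x‖ := norm_mul _ _
              _ ≤ ‖F x - h x‖ * ‖g‖ := mul_le_mul_of_nonneg_left hvx (norm_nonneg _)
              _ = ‖g‖ * ‖F x - h x‖ := mul_comm _ _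
        _ = ‖g‖ * ∫ x, ‖F x - h x‖ ∂μ := integral_const_mul _ _
        _ ≤ ‖g‖ * (ε / (4 * (‖g‖ + 1))) :=
            mul_le_mul_of_nonneg_left hh1 (norm_nonneg _)
        _ ≤ ε / 4 := hkey
    obtain ⟨N, hN⟩ := Metric.tendsto_atTop.mp (hb h) (ε / 4) (by positivity)
    refine ⟨N, fun n hn => ?_⟩
    have h1 := core (Fn n) (meas (K n)) (bound (K n))
    have h2 := core F (meas Kinf) (bound Kinf)
    have h3 := hN n hn
    rw [Real.dist_eq] at h3 ⊢
    have t1 := abs_sub_le (∫ x, F x * Fn n x ∂μ) (∫ x, h x * Fn n x ∂μ) (∫ x, h x * F x ∂μ)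
    have t2 := abs_sub_le (∫ x, F x * Fn n x ∂μ) (∫ x, h x * F x ∂μ) (∫ x, F x * F x ∂μ)
    have h2' : |∫ x, h x * F x ∂μ - ∫ x, F x * F x ∂μ| ≤ ε / 4 := by
      rw [abs_sub_comm]; exact h2
    linarith
  -- expansion
  have expand : ∀ n, ∫ x, (Fn n x - F x) ^ 2 ∂μ
      = (∫ x, (Fn n x) ^ 2 ∂μ) - 2 * (∫ x, F x * Fn n x ∂μ) + ∫ x, F x * F x ∂μ := by
    intro n
    have e : (fun x => (Fn n x - F x) ^ 2)
        = fun x => ((Fn n x) ^ 2 - 2 * (F x * Fn n x)) + F x * F x := by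
      funext x; ring
    have i1 : Integrable (fun x => Fn n x ^ 2 - 2 * (F x * Fn n x)) μ :=
      (hFnFn n).sub ((hFFn n).const_mul 2)
    rw [e, integral_add i1 hFF, integral_sub (hFnFn n) ((hFFn n).const_mul 2),
      integral_const_mul 2 _]
  -- conclude
  have T : Tendsto (fun n => (∫ x, (Fn n x) ^ 2 ∂μ) - 2 * (∫ x, F x * Fn n x ∂μ)
        + ∫ x, F x * F x ∂μ) atTop
      (nhds ((∫ x, (F x) ^ 2 ∂μ) - 2 * (∫ x, F x * F x ∂μ) + ∫ x, F x * F x ∂μ)) :=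
    (ha.sub (hc.const_mul 2)).add tendsto_const_nhds
  have hFsq : ∫ x, (F x) ^ 2 ∂μ = ∫ x, F x * F x ∂μ := by
    congr 1; funext x; ring
  have hzero : (∫ x, F x * F x ∂μ) - 2 * (∫ x, F x * F x ∂μ) + ∫ x, F x * F x ∂μ = 0 := by
    ring
  rw [hFsq, hzero] at T
  exact T.congr fun n => (expand n).symm
end

section
/- Assume that the sequence (m_n)_{n∈ℕ} converges weakly to m_∞ on V × W × W (i.e. integrals of every bounded continuous real function converge). Then for every bounded continuous g : W → ℝ, lim_{n→∞} ∫_V (K_n[g](x))² μ(dx) = ∫_V (K_∞[g](x))² μ(dx). -/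
open MeasureTheory ProbabilityTheory Filter
open scoped ProbabilityTheory

/-- if the measures `m_n := μ(dx) K_n(x,dy) K_n(x,dz)` converge weakly to
`m_∞`, then for every bounded continuous `g : W → ℝ` the `L²(μ)` norms converge:
`∫ (K_n[g])² dμ → ∫ (K_∞[g])² dμ`. -/
theorem stmt_2
    {V W : Type*}
    [TopologicalSpace V] [PolishSpace V] [MeasurableSpace V] [BorelSpace V]
    [TopologicalSpace W] [PolishSpace W] [MeasurableSpace W] [BorelSpace W]
    (μ : Measure V) [IsProbabilityMeasure μ]
    (K : ℕ → Kernel V W) (Kinf : Kernel V W)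
    [∀ n, IsMarkovKernel (K n)] [IsMarkovKernel Kinf]
    (hconv : ∀ f : BoundedContinuousFunction (V × W × W) ℝ,
      Tendsto (fun n => ∫ p, f p ∂(μ ⊗ₘ ((K n) ×ₖ (K n)))) atTop
        (nhds (∫ p, f p ∂(μ ⊗ₘ (Kinf ×ₖ Kinf))))) :
    ∀ g : BoundedContinuousFunction W ℝ,
      Tendsto (fun n => ∫ x, (∫ y, g y ∂(K n x)) ^ 2 ∂μ)
        atTop (nhds (∫ x, (∫ y, g y ∂(Kinf x)) ^ 2 ∂μ)) := by
  intro g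
  set c1 : ContinuousMap (V × W × W) W := ⟨fun p => p.2.1, by fun_prop⟩ with hc1
  set c2 : ContinuousMap (V × W × W) W := ⟨fun p => p.2.2, by fun_prop⟩ with hc2
  set f : BoundedContinuousFunction (V × W × W) ℝ :=
    (g.compContinuous c1) * (g.compContinuous c2) with hf
  have key : ∀ (κ : Kernel V W) [IsMarkovKernel κ],
      ∫ p, f p ∂(μ ⊗ₘ (κ ×ₖ κ)) = ∫ x, (∫ y, g y ∂(κ x)) ^ 2 ∂μ := by
    intro κ _
    have hint : Integrable f (μ ⊗ₘ (κ ×ₖ κ)) := f.integrable _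
    rw [Measure.integral_compProd hint]
    congr 1
    ext x
    have : ∫ p : W × W, f (x, p) ∂((κ ×ₖ κ) x)
        = ∫ p : W × W, g p.1 * g p.2 ∂((κ x).prod (κ x)) := by
      rw [Kernel.prod_apply]; rfl
    rw [this, integral_prod_mul, sq]
  have h := hconv f
  rw [key Kinf] at h
  convert h using 2 with n
  rw [key (K n)]
end

section
/- Let f : [0,∞) → ℝ be continuous with f(0) ≥ 0. Define y(t) := −min(0, min_{0≤s≤t} f(s)). Then y is continuous, nondecreasing, y(0) = 0, f(t) + y(t) ≥ 0 for all t ≥ 0, and y is constant on every interval on which f + y is strictly positive; in other words, y solves the Skorokhod problem for f. -/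
open Set

/-- for a continuous `f : [0,∞) → ℝ` with `f 0 ≥ 0`, the function
`y(t) := −min(0, min_{0≤s≤t} f(s))` solves the Skorokhod problem for `f`: it is
continuous, nondecreasing, starts at `0`, keeps `f + y ≥ 0`, and is constant on every
interval on which `f + y` is strictly positive. -/
theorem stmt_6
    (f : ℝ → ℝ) (hf : ContinuousOn f (Ici 0)) (hf0 : 0 ≤ f 0)
    (y : ℝ → ℝ) (hy : ∀ t, y t = -(min 0 (sInf (f '' Icc 0 t)))) :
    ContinuousOn y (Ici 0) ∧
    MonotoneOn y (Ici 0) ∧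
    y 0 = 0 ∧
    (∀ t ∈ Ici (0 : ℝ), 0 ≤ f t + y t) ∧
    (∀ a b : ℝ, 0 ≤ a → a ≤ b → (∀ t ∈ Icc a b, 0 < f t + y t) →
      ∀ t ∈ Icc a b, y t = y a) := by
  set m : ℝ → ℝ := fun t => sInf (f '' Icc 0 t) with hm
  have hcont2 : ∀ a b : ℝ, 0 ≤ a → ContinuousOn f (Icc a b) := fun a b ha =>
    hf.mono (fun s hs => le_trans ha hs.1)
  have hbdd2 : ∀ a b : ℝ, 0 ≤ a → BddBelow (f '' Icc a b) := fun a b ha =>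
    isCompact_Icc.bddBelow_image (hcont2 a b ha)
  have hne2 : ∀ a b : ℝ, a ≤ b → (f '' Icc a b).Nonempty := fun a b hab =>
    (nonempty_Icc.mpr hab).image f
  have hbdd : ∀ t : ℝ, 0 ≤ t → BddBelow (f '' Icc 0 t) := fun t _ => hbdd2 0 t le_rfl
  have hne : ∀ t : ℝ, 0 ≤ t → (f '' Icc 0 t).Nonempty := fun t ht => hne2 0 t ht
  have hsplit : ∀ a b : ℝ, 0 ≤ a → a ≤ b →
      m b = min (m a) (sInf (f '' Icc a b)) := by
    intro a b ha hab
    have h1 : Icc (0:ℝ) b = Icc 0 a ∪ Icc a b := (Icc_union_Icc_eq_Icc ha hab).symm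
    simp only [hm, h1, image_union]
    exact csInf_union (hbdd a ha) (hne a ha) (hbdd2 a b ha) (hne2 a b hab)
  have hanti : ∀ a b : ℝ, 0 ≤ a → a ≤ b → m b ≤ m a := by
    intro a b ha hab
    rw [hsplit a b ha hab]; exact min_le_left _ _
  have hmf : ∀ t : ℝ, 0 ≤ t → m t ≤ f t := fun t ht =>
    csInf_le (hbdd t ht) ⟨t, ⟨ht, le_rfl⟩, rfl⟩
  -- continuity of m on Ici 0
  have hmcont : ContinuousOn m (Ici 0) := by
    intro a ha
    rw [Metric.continuousWithinAt_iff]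
    intro ε hε
    obtain ⟨δ, hδ, hδ'⟩ := Metric.continuousWithinAt_iff.mp (hf a ha) (ε/3) (by positivity)
    refine ⟨δ, hδ, ?_⟩
    intro x hx hxa
    have hfa : ∀ s, s ∈ Ici (0:ℝ) → |s - a| < δ → |f s - f a| < ε/3 := by
      intro s hs hsd
      have := hδ' hs (by rwa [Real.dist_eq])
      rwa [Real.dist_eq] at this
    rw [Real.dist_eq] at hxa ⊢
    rw [abs_sub_lt_iff]
    rcases le_total a x with hax | hxa'
    · -- a ≤ x
      have hs : m x = min (m a) (sInf (f '' Icc a x)) := hsplit a x ha hax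
      have hlow : f a - ε/3 ≤ sInf (f '' Icc a x) := by
        apply le_csInf (hne2 a x hax)
        rintro z ⟨s, hsi, rfl⟩
        have h1 : |s - a| < δ := by
          rw [abs_sub_lt_iff]; rw [abs_sub_lt_iff] at hxa
          constructor <;> [linarith [hsi.2, hxa.1]; linarith [hsi.1]]
        have := hfa s (le_trans ha hsi.1) h1
        rw [abs_sub_lt_iff] at this; linarith [this.2]
      have hma : m a ≤ f a := le_trans (hmf a ha) le_rfl
      have hxle : m x ≤ m a := hanti a x ha hax
      have : min (m a) (f a - ε/3) ≤ m x := by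
        rw [hs]; exact min_le_min le_rfl hlow
      have h2 : m a - ε/3 ≤ min (m a) (f a - ε/3) := le_min (by linarith) (by linarith)
      constructor <;> linarith
    · -- x ≤ a
      have hs : m a = min (m x) (sInf (f '' Icc x a)) := hsplit x a hx hxa'
      have hlow : f a - ε/3 ≤ sInf (f '' Icc x a) := by
        apply le_csInf (hne2 x a hxa')
        rintro z ⟨s, hsi, rfl⟩
        have h1 : |s - a| < δ := by
          rw [abs_sub_lt_iff]; rw [abs_sub_lt_iff] at hxa
          constructor <;> [linarith [hsi.2]; linarith [hsi.1, hxa.2]]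
        have := hfa s (le_trans hx hsi.1) h1
        rw [abs_sub_lt_iff] at this; linarith [this.2]
      have hfx : |f x - f a| < ε/3 := hfa x hx hxa
      rw [abs_sub_lt_iff] at hfx
      have hmx : m x ≤ f x := hmf x hx
      have hale : m a ≤ m x := hanti x a hx hxa'
      have : min (m x) (f a - ε/3) ≤ m a := by
        rw [hs]; exact min_le_min le_rfl hlow
      have h2 : m x - 2*(ε/3) ≤ min (m x) (f a - ε/3) := le_min (by linarith) (by linarith [hfx.1])
      constructor <;> linarith
  have hycont : ContinuousOn y (Ici 0) := by
    have : ContinuousOn (fun t => -(min 0 (m t))) (Ici 0) :=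
      (ContinuousOn.inf continuousOn_const hmcont).neg
    exact this.congr (fun t _ => hy t)
  have hymono : MonotoneOn y (Ici 0) := by
    intro a ha b hb hab
    rw [hy a, hy b, neg_le_neg_iff]
    exact min_le_min le_rfl (hanti a b ha hab)
  have hy0 : y 0 = 0 := by
    rw [hy 0, Icc_self, image_singleton, csInf_singleton, min_eq_left hf0, neg_zero]
  have hpos : ∀ t ∈ Ici (0:ℝ), 0 ≤ f t + y t := by
    intro t ht
    rw [hy t]
    have h1 : min 0 (m t) ≤ m t := min_le_right _ _
    have := hmf t ht
    linarith
  refine ⟨hycont, hymono, hy0, hpos, ?_⟩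
  intro a b ha hab hstrict t ht
  by_contra hne'
  have hta : 0 ≤ t := le_trans ha ht.1
  have hlt : y a < y t := lt_of_le_of_ne (hymono ha hta ht.1) (Ne.symm hne')
  rw [hy a, hy t] at hlt
  have hmin : min 0 (m t) < min 0 (m a) := by linarith
  have hmt_neg : m t < 0 := by
    by_contra h
    push_neg at h
    rw [min_eq_left h] at hmin
    exact absurd hmin (not_lt.mpr (min_le_left _ _))
  have hmt_eq : min 0 (m t) = m t := min_eq_right hmt_neg.le
  have hmta : m t < m a := by
    have h1 : min 0 (m a) ≤ m a := min_le_right _ _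
    linarith [hmt_eq]
  -- m t = sInf over [a,t], attained at some s
  have hsplit' := hsplit a t ha ht.1
  have heq : m t = sInf (f '' Icc a t) := by
    rcases min_cases (m a) (sInf (f '' Icc a t)) with ⟨h1, h2⟩ | ⟨h1, h2⟩
    · rw [hsplit', h1] at hmta; exact absurd hmta (lt_irrefl _)
    · rw [hsplit', h1]
  obtain ⟨s, hs, hfs⟩ := isCompact_Icc.exists_sInf_image_eq (nonempty_Icc.mpr ht.1)
    (hcont2 a t ha)
  have hsa : 0 ≤ s := le_trans ha hs.1
  have hms : m s ≤ f s := hmf s hsa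
  have hms2 : m t ≤ m s := hanti s t hsa hs.2
  have hfs_eq : f s = m t := by rw [heq, hfs]
  have hms_eq : m s = m t := le_antisymm (hfs_eq ▸ hms) hms2
  have hys : y s = -(m s) := by
    have h0 : m s ≤ 0 := hms_eq ▸ hmt_neg.le
    rw [hy s]
    exact congrArg Neg.neg (min_eq_right h0)
  have : f s + y s = 0 := by rw [hys, hfs_eq, hms_eq]; ring
  have := hstrict s ⟨hs.1, le_trans hs.2 ht.2⟩
  linarith
end

section
/- If f ∈ 𝓡, then for every t ≥ 0 the function P_t[f] belongs to 𝓡. Consequently, for every f ∈ 𝓡 and every x ∈ V, the map [0,∞) ∋ t ↦ P_t[f](x) is right-continuous. -/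
open MeasureTheory ProbabilityTheory Filter

/-- the class `𝓡` (bounded measurable functions `f` with `P_0[f] = f` and
`P_t[f](x) → f(x)` as `t → 0⁺` for every `x`) is stable under the semigroup:
if `f ∈ 𝓡` then `P_t[f] ∈ 𝓡` for every `t ≥ 0`; consequently, for every `f ∈ 𝓡` and
`x`, the map `t ↦ P_t[f](x)` is right-continuous on `[0,∞)`. -/
theorem stmt_9
    {V : Type*} [MeasurableSpace V]
    (P : ℝ → Kernel V V) [∀ t, IsMarkovKernel (P t)]
    (hsemi : ∀ s t : ℝ, 0 ≤ s → 0 ≤ t → ∀ f : V → ℝ,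
      Measurable f → (∃ C, ∀ v, |f v| ≤ C) →
      ∀ x, ∫ y, f y ∂(P (t + s) x) = ∫ y, (∫ z, f z ∂(P s y)) ∂(P t x))
    (f : V → ℝ) (hfm : Measurable f) (hfb : ∃ C, ∀ v, |f v| ≤ C)
    (hf0 : ∀ x, ∫ y, f y ∂(P 0 x) = f x)
    (hfR : ∀ x, Tendsto (fun t : ℝ => ∫ y, f y ∂(P t x))
      (nhdsWithin 0 (Set.Ioi 0)) (nhds (f x))) :
    (∀ t : ℝ, 0 ≤ t →
      (∀ x, ∫ y, (∫ z, f z ∂(P t y)) ∂(P 0 x) = ∫ z, f z ∂(P t x)) ∧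
      (∀ x, Tendsto (fun s : ℝ => ∫ y, (∫ z, f z ∂(P t y)) ∂(P s x))
        (nhdsWithin 0 (Set.Ioi 0)) (nhds (∫ z, f z ∂(P t x))))) ∧
    (∀ x, ∀ t : ℝ, 0 ≤ t →
      Tendsto (fun u : ℝ => ∫ y, f y ∂(P u x))
        (nhdsWithin t (Set.Ici t)) (nhds (∫ y, f y ∂(P t x)))) := by
  obtain ⟨C, hC⟩ := hfb
  -- measurability of `y ↦ ∫ f d(P s y)`
  have hmeas : ∀ s : ℝ, StronglyMeasurable fun y => ∫ z, f z ∂(P s y) := by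
    intro s
    exact (hfm.stronglyMeasurable.comp_measurable measurable_snd
      : StronglyMeasurable fun p : V × V => f p.2).integral_kernel_prod_right' (κ := P s)
  -- uniform bound on `∫ f d(P s y)`
  have hbd : ∀ (s : ℝ) (y : V), ‖∫ z, f z ∂(P s y)‖ ≤ C := by
    intro s y
    calc ‖∫ z, f z ∂(P s y)‖ ≤ C * ((P s y) Set.univ).toReal :=
          norm_integral_le_of_norm_le_const (Filter.Eventually.of_forall fun z => by
            simpa [Real.norm_eq_abs] using hC z)
      _ = C := by simp
  -- dominated convergence key lemma
  have key : ∀ (t : ℝ) (x : V),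
      Tendsto (fun s : ℝ => ∫ y, (∫ z, f z ∂(P s y)) ∂(P t x))
        (nhdsWithin 0 (Set.Ioi 0)) (nhds (∫ y, f y ∂(P t x))) := by
    intro t x
    refine tendsto_integral_filter_of_dominated_convergence (fun _ => C)
      (Filter.Eventually.of_forall fun s => (hmeas s).aestronglyMeasurable)
      (Filter.Eventually.of_forall fun s =>
        Filter.Eventually.of_forall fun y => hbd s y)
      (integrable_const C)
      (Filter.Eventually.of_forall fun y => hfR y)
  constructor
  · intro t ht
    constructor
    · intro x
      have h := hsemi t 0 ht le_rfl f hfm ⟨C, hC⟩ x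
      rw [zero_add] at h
      exact h.symm
    · intro x
      have heq : ∀ s ∈ Set.Ioi (0 : ℝ),
          ∫ y, (∫ z, f z ∂(P t y)) ∂(P s x) = ∫ y, (∫ z, f z ∂(P s y)) ∂(P t x) := by
        intro s hs
        have h1 := hsemi t s ht (le_of_lt hs) f hfm ⟨C, hC⟩ x
        have h2 := hsemi s t (le_of_lt hs) ht f hfm ⟨C, hC⟩ x
        rw [add_comm] at h2
        rw [← h1, h2]
      refine (key t x).congr' ?_
      filter_upwards [self_mem_nhdsWithin] with s hs
      exact (heq s hs).symm
  · intro x t ht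
    rw [← Set.Ioi_insert, nhdsWithin_insert]
    refine Tendsto.sup (tendsto_pure_nhds _ t) ?_
    have hsub : Tendsto (fun u : ℝ => u - t) (nhdsWithin t (Set.Ioi t))
        (nhdsWithin 0 (Set.Ioi 0)) := by
      apply tendsto_nhdsWithin_of_tendsto_nhds_of_eventually_within
      · have : Tendsto (fun u : ℝ => u - t) (nhds t) (nhds 0) := by
          have := ((continuous_id.sub continuous_const).tendsto t : Tendsto (fun u : ℝ => u - t) (nhds t) (nhds (t - t)))
          have h' : Tendsto (fun u : ℝ => u - t) (nhds t) (nhds (t - t)) := this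
          rwa [sub_self] at h'
        exact this.mono_left nhdsWithin_le_nhds
      · filter_upwards [self_mem_nhdsWithin] with u hu
        exact Set.mem_Ioi.mpr (sub_pos.mpr (Set.mem_Ioi.mp hu))
    refine ((key t x).comp hsub).congr' ?_
    filter_upwards [self_mem_nhdsWithin] with u hu
    have h := hsemi (u - t) t (by linarith [Set.mem_Ioi.mp hu]) ht f hfm ⟨C, hC⟩ x
    rw [add_sub_cancel] at h
    exact h.symm
end

section
/- Let f and g be bounded measurable real functions on V with g ∈ 𝓡, such that for every x ∈ V the map s ↦ P_s[g](x) is measurable and P_t[f](x) − f(x) = ∫_0^t P_s[g](x) ds for all t ≥ 0 and x ∈ V. Then for every x ∈ V, lim_{t→0⁺} (P_t[f](x) − f(x))/t = g(x). In particular, a function g ∈ 𝓡 satisfying this integral relation with f is uniquely determined by f. -/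
open MeasureTheory ProbabilityTheory Filter

lemma avg_tendsto_aux (h : ℝ → ℝ) (hm : Measurable h) (C : ℝ) (hb : ∀ s, |h s| ≤ C)
    (L : ℝ) (hL : Tendsto h (nhdsWithin 0 (Set.Ioi 0)) (nhds L)) :
    Tendsto (fun t : ℝ => (∫ s in (0:ℝ)..t, h s) / t) (nhdsWithin 0 (Set.Ioi 0)) (nhds L) := by
  rw [Metric.tendsto_nhdsWithin_nhds]
  intro ε hε
  rw [Metric.tendsto_nhdsWithin_nhds] at hL
  obtain ⟨δ, hδ, hδ'⟩ := hL (ε/2) (by linarith)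
  refine ⟨δ, hδ, ?_⟩
  intro t ht htd
  have ht0 : (0:ℝ) < t := ht
  have hii : IntervalIntegrable h volume 0 t := by
    rw [intervalIntegrable_iff]
    refine Integrable.mono' (g := fun _ => C) ?_ hm.aestronglyMeasurable.restrict ?_
    · exact integrableOn_const measure_Ioc_lt_top.ne
    · exact Filter.Eventually.of_forall fun s => by simpa using hb s
  have key : |(∫ s in (0:ℝ)..t, h s) - t * L| ≤ (ε/2) * t := by
    have : (∫ s in (0:ℝ)..t, h s) - t * L = ∫ s in (0:ℝ)..t, (h s - L) := by
      rw [intervalIntegral.integral_sub hii (intervalIntegrable_const)]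
      simp
    rw [this]
    have := intervalIntegral.norm_integral_le_of_norm_le_const (C := ε/2) (a := (0:ℝ)) (b := t)
      (f := fun s => h s - L) ?_
    · simpa [abs_of_pos ht0] using this
    · intro s hs
      rw [Set.uIoc_of_le ht0.le] at hs
      have := hδ' hs.1 (by rw [Real.dist_eq, sub_zero, abs_of_pos hs.1]; exact lt_of_le_of_lt hs.2 (by simpa [Real.dist_eq, abs_of_pos ht0] using htd))
      simpa [Real.dist_eq] using this.le
  rw [Real.dist_eq]
  have : (∫ s in (0:ℝ)..t, h s) / t - L = ((∫ s in (0:ℝ)..t, h s) - t * L) / t := by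
    field_simp
  rw [this, abs_div, abs_of_pos ht0, div_lt_iff₀ ht0]
  calc |(∫ s in (0:ℝ)..t, h s) - t * L| ≤ (ε/2) * t := key
    _ < ε * t := by nlinarith

/-- if `f, g` are bounded measurable, `g ∈ 𝓡`, `s ↦ P_s[g](x)` is measurable
and `P_t[f](x) − f(x) = ∫_0^t P_s[g](x) ds` for all `t ≥ 0` and `x`, then
`(P_t[f](x) − f(x))/t → g(x)` as `t → 0⁺` for every `x`; in particular, a function
`g ∈ 𝓡` satisfying the integral relation with `f` is uniquely determined by `f`. -/
theorem stmt_10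
    {V : Type*} [MeasurableSpace V]
    (P : ℝ → Kernel V V) [∀ t, IsMarkovKernel (P t)]
    (hsemi : ∀ s t : ℝ, 0 ≤ s → 0 ≤ t → ∀ f : V → ℝ,
      Measurable f → (∃ C, ∀ v, |f v| ≤ C) →
      ∀ x, ∫ y, f y ∂(P (t + s) x) = ∫ y, (∫ z, f z ∂(P s y)) ∂(P t x))
    (f g : V → ℝ)
    (hfm : Measurable f) (hfb : ∃ C, ∀ v, |f v| ≤ C)
    (hgm : Measurable g) (hgb : ∃ C, ∀ v, |g v| ≤ C)
    (hg0 : ∀ x, ∫ y, g y ∂(P 0 x) = g x)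
    (hgR : ∀ x, Tendsto (fun t : ℝ => ∫ y, g y ∂(P t x))
      (nhdsWithin 0 (Set.Ioi 0)) (nhds (g x)))
    (hgmeas : ∀ x, Measurable fun s : ℝ => ∫ y, g y ∂(P s x))
    (hint : ∀ x, ∀ t : ℝ, 0 ≤ t →
      (∫ y, f y ∂(P t x)) - f x = ∫ s in (0:ℝ)..t, ∫ y, g y ∂(P s x)) :
    (∀ x, Tendsto (fun t : ℝ => ((∫ y, f y ∂(P t x)) - f x) / t)
      (nhdsWithin 0 (Set.Ioi 0)) (nhds (g x))) ∧
    (∀ g' : V → ℝ, Measurable g' → (∃ C, ∀ v, |g' v| ≤ C) →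
      (∀ x, ∫ y, g' y ∂(P 0 x) = g' x) →
      (∀ x, Tendsto (fun t : ℝ => ∫ y, g' y ∂(P t x))
        (nhdsWithin 0 (Set.Ioi 0)) (nhds (g' x))) →
      (∀ x, Measurable fun s : ℝ => ∫ y, g' y ∂(P s x)) →
      (∀ x, ∀ t : ℝ, 0 ≤ t →
        (∫ y, f y ∂(P t x)) - f x = ∫ s in (0:ℝ)..t, ∫ y, g' y ∂(P s x)) →
      g' = g) := by

  have main : ∀ (g : V → ℝ), Measurable g → (∃ C, ∀ v, |g v| ≤ C) →
      (∀ x, Tendsto (fun t : ℝ => ∫ y, g y ∂(P t x)) (nhdsWithin 0 (Set.Ioi 0)) (nhds (g x))) →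
      (∀ x, Measurable fun s : ℝ => ∫ y, g y ∂(P s x)) →
      (∀ x, ∀ t : ℝ, 0 ≤ t →
        (∫ y, f y ∂(P t x)) - f x = ∫ s in (0:ℝ)..t, ∫ y, g y ∂(P s x)) →
      ∀ x, Tendsto (fun t : ℝ => ((∫ y, f y ∂(P t x)) - f x) / t)
        (nhdsWithin 0 (Set.Ioi 0)) (nhds (g x)) := by
    intro g hgm hgb hgR hgmeas hint x
    obtain ⟨C, hC⟩ := hgb
    have hC0 : 0 ≤ C := le_trans (abs_nonneg _) (hC x)
    have hb : ∀ s : ℝ, |∫ y, g y ∂(P s x)| ≤ C := by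
      intro s
      rw [← Real.norm_eq_abs]
      calc ‖∫ y, g y ∂(P s x)‖ ≤ C * ((P s x) Set.univ).toReal :=
            norm_integral_le_of_norm_le_const (μ := P s x) (Filter.Eventually.of_forall fun y => by
              rw [Real.norm_eq_abs]; exact hC y)
        _ = C := by simp
    have := avg_tendsto_aux (fun s => ∫ y, g y ∂(P s x)) (hgmeas x) C hb (g x) (hgR x)
    apply this.congr'
    filter_upwards [self_mem_nhdsWithin] with t ht
    rw [hint x t (le_of_lt ht)]
  refine ⟨main g hgm hgb hgR hgmeas hint, ?_⟩
  intro g' hg'm hg'b _ hg'R hg'meas hint'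
  funext x
  exact tendsto_nhds_unique (main g' hg'm hg'b hg'R hg'meas hint' x)
    (main g hgm hgb hgR hgmeas hint x)
end
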